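/- A pencil α is equivalent to a regular pencil ρ if and only if α ⊆ ρ; consequently each equivalence class of pencils contains at most one regular pencil. -/
import Mathlib


/-- An incidence plane: points, lines, and an incidence relation. -/
structure IncidencePlane where
  Point : Type
  Line : Type
  mem : Point → Line → Prop

namespace IncidencePlane

variable (G : IncidencePlane)

/-- Lines `l` and `m` intersect: they are distinct and have a common point. -/
def Intersect (l m : G.Line) : Prop := l ≠ m ∧ ∃ Q, G.mem Q l ∧ G.mem Q m

/-- Parallel is the negation of intersecting. -/
def Par (l m : G.Line) : Prop := ¬ G.Intersect l m

/-- The point set of a line. -/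
def lineSet (l : G.Line) : Set G.Point := {Q | G.mem Q l}

/-- The pencil of all lines through a point `Q`, written `Q*`. -/
def pointPencil (Q : G.Point) : Set G.Line := {l | G.mem Q l}

/-- The pencil of all lines parallel to `l`, written `l*`. -/
def parPencil (l : G.Line) : Set G.Line := {m | G.Par m l}

/-- A regular pencil has the form `Q*` or `l*`. -/
def Regular (ρ : Set G.Line) : Prop :=
  (∃ Q, ρ = G.pointPencil Q) ∨ (∃ l, ρ = G.parPencil l)

/-- A pencil: (1) it cannot contain fewer than two lines; (2) two distinct
lines of it lying in a regular pencil `ρ` force inclusion in `ρ`. -/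
def IsPencil (α : Set G.Line) : Prop :=
  (¬ ∀ l ∈ α, ∀ m ∈ α, l = m) ∧
  (∀ ρ : Set G.Line, G.Regular ρ → ∀ l ∈ α, ∀ m ∈ α, l ≠ m → l ∈ ρ → m ∈ ρ → α ⊆ ρ)

/-- A complete pencil: two distinct lines of it in a regular pencil `ρ` force equality with `ρ`. -/
def Complete (α : Set G.Line) : Prop :=
  ∀ ρ : Set G.Line, G.Regular ρ → ∀ l ∈ α, ∀ m ∈ α, l ≠ m → l ∈ ρ → m ∈ ρ → α = ρ

/-- A strictly complete pencil: contained in a regular pencil implies equal to it. -/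
def StrictlyComplete (α : Set G.Line) : Prop :=
  ∀ ρ : Set G.Line, G.Regular ρ → α ⊆ ρ → α = ρ

/-- `l` lies outside the family `α`: it differs from every line of `α`. -/
def LineOutside (l : G.Line) (α : Set G.Line) : Prop := ∀ m ∈ α, l ≠ m

/-- Pencils `α` and `β` are distinct: some line of one lies outside the other. -/
def PDistinct (α β : Set G.Line) : Prop :=
  (∃ l ∈ α, G.LineOutside l β) ∨ (∃ l ∈ β, G.LineOutside l α)

/-- Pencils are equivalent when they are contained in exactly the same regular pencils. -/
def PEquiv (α β : Set G.Line) : Prop :=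
  ∀ ρ : Set G.Line, G.Regular ρ → (α ⊆ ρ ↔ β ⊆ ρ)

/-- A parallel pencil: a pencil any two of whose lines are parallel. -/
def ParallelPencil (α : Set G.Line) : Prop :=
  G.IsPencil α ∧ ∀ l ∈ α, ∀ m ∈ α, G.Par l m

/-- Point `Q` lies outside line `l`: it differs from every point of `l`. -/
def PointOutside (Q : G.Point) (l : G.Line) : Prop := ∀ R, G.mem R l → Q ≠ R

/-- The union of all pencils equivalent to `α` (the full pencil `α'`). -/
def fullPencil (α : Set G.Line) : Set G.Line :=
  ⋃₀ {β | G.IsPencil β ∧ G.PEquiv β α}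

/-- The core of two pencils: points lying on a common line of the two pencils. -/
def core (α β : Set G.Line) : Set G.Point :=
  {Q | ∃ l, l ∈ α ∩ β ∧ G.mem Q l}

/-- A virtual line: a set of points which is a line whenever it is inhabited. -/
def VLine (p : Set G.Point) : Prop :=
  p.Nonempty → ∃ l : G.Line, p = G.lineSet l

/-- Distinctness of virtual lines. -/
def VDistinct (p q : Set G.Point) : Prop :=
  ¬ (p = q) ∧ ∀ l m : G.Line, p = G.lineSet l → q = G.lineSet m → l ≠ m

/-- Equivalence of virtual lines: the negation of distinctness. -/
def VEquiv (p q : Set G.Point) : Prop := ¬ G.VDistinct p q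

/-- The union of all virtual lines equivalent to `p`. -/
def vfull (p : Set G.Point) : Set G.Point :=
  ⋃₀ {q | G.VLine q ∧ G.VEquiv q p}

/-- The axioms of an incidence plane used in this paper. -/
structure Axioms (G : IncidencePlane) : Prop where
  join : ∀ Q R : G.Point, Q ≠ R → ∃ l, G.mem Q l ∧ G.mem R l
  join_unique : ∀ Q R : G.Point, Q ≠ R → ∀ l m : G.Line,
      G.mem Q l → G.mem R l → G.mem Q m → G.mem R m → l = m
  cross_unique : ∀ l m : G.Line, l ≠ m → ∀ Q R : G.Point,
      G.mem Q l → G.mem Q m → G.mem R l → G.mem R m → Q = R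
  parPost : ∀ (Q : G.Point) (l : G.Line), ∃ n, G.mem Q n ∧ G.Par n l
  parPost_unique : ∀ (Q : G.Point) (l : G.Line) (n n' : G.Line),
      G.mem Q n → G.Par n l → G.mem Q n' → G.Par n' l → n = n'
  par_int : ∀ n₁ n₂ l m : G.Line,
      G.Par n₁ l → G.Par n₂ m → G.Intersect l m → G.Intersect n₁ n₂
  not_pointOutside : ∀ (Q : G.Point) (l : G.Line), ¬ G.PointOutside Q l → G.mem Q l
  two_points : ∀ l : G.Line, ∃ Q R : G.Point, Q ≠ R ∧ G.mem Q l ∧ G.mem R l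
  exists_intersecting : ∃ l m : G.Line, G.Intersect l m

end IncidencePlane

open IncidencePlane

lemma par_symm (G : IncidencePlane) {l m : G.Line} (h : G.Par l m) : G.Par m l := by
  rintro ⟨hne, Q, hQm, hQl⟩
  exact h ⟨hne.symm, Q, hQl, hQm⟩

lemma par_refl (G : IncidencePlane) (l : G.Line) : G.Par l l := by
  rintro ⟨hne, _⟩; exact hne rfl

/-- Two distinct lines lie in at most one regular pencil. -/
lemma regular_unique (G : IncidencePlane) (ax : G.Axioms) {ρ σ : Set G.Line}
    (hρ : G.Regular ρ) (hσ : G.Regular σ) {l m : G.Line} (hlm : l ≠ m)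
    (hlρ : l ∈ ρ) (hmρ : m ∈ ρ) (hlσ : l ∈ σ) (hmσ : m ∈ σ) : ρ = σ := by
  rcases hρ with ⟨Q, rfl⟩ | ⟨l₀, rfl⟩ <;> rcases hσ with ⟨R, rfl⟩ | ⟨m₀, rfl⟩
  · by_cases hQR : Q = R
    · rw [hQR]
    · exact absurd (ax.join_unique Q R hQR l m hlρ hlσ hmρ hmσ) hlm
  · exact absurd (ax.parPost_unique Q m₀ l m hlρ hlσ hmρ hmσ) hlm
  · exact absurd (ax.parPost_unique R l₀ l m hlσ hlρ hmσ hmρ) hlm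
  · -- both parallel pencils
    have hpar : G.Par l₀ m₀ := fun hint =>
      par_refl G l (ax.par_int l l l₀ m₀ hlρ hlσ hint)
    ext n
    constructor
    · intro hn
      exact fun hint =>
        hpar (ax.par_int l₀ m₀ n m₀ (par_symm G hn) (par_refl G m₀) hint)
    · intro hn
      exact fun hint =>
        (par_symm G hpar) (ax.par_int m₀ l₀ n l₀ (par_symm G hn) (par_refl G l₀) hint)

lemma pencil_two_lines (G : IncidencePlane) {α : Set G.Line} (hα : G.IsPencil α) :
    ∃ l ∈ α, ∃ m ∈ α, l ≠ m := by
  have h := hα.1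
  push_neg at h
  exact h

/-- α ≈ ρ iff α ⊆ ρ for regular ρ; each equivalence class
contains at most one regular pencil. -/
theorem equiv_regular_iff_subset (G : IncidencePlane) (ax : G.Axioms) :
    (∀ α ρ : Set G.Line, G.IsPencil α → G.Regular ρ →
      (G.PEquiv α ρ ↔ α ⊆ ρ)) ∧
    (∀ α ρ σ : Set G.Line, G.IsPencil α → G.Regular ρ → G.Regular σ →
      G.PEquiv α ρ → G.PEquiv α σ → ρ = σ) := by
  have main : ∀ α ρ : Set G.Line, G.IsPencil α → G.Regular ρ →
      (G.PEquiv α ρ ↔ α ⊆ ρ) := by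
    intro α ρ hα hρ
    constructor
    · intro h
      exact (h ρ hρ).mpr (subset_refl ρ)
    · intro hsub σ hσ
      constructor
      · intro hασ
        obtain ⟨l, hl, m, hm, hlm⟩ := pencil_two_lines G hα
        exact (regular_unique G ax hρ hσ hlm (hsub hl) (hsub hm) (hασ hl) (hασ hm)) ▸
          subset_refl ρ
      · intro hρσ
        exact hsub.trans hρσ
  refine ⟨main, ?_⟩
  intro α ρ σ hα hρ hσ h1 h2
  obtain ⟨l, hl, m, hm, hlm⟩ := pencil_two_lines G hα
  have hr := (main α ρ hα hρ).mp h1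
  have hs := (main α σ hα hσ).mp h2
  exact regular_unique G ax hρ hσ hlm (hr hl) (hr hm) (hs hl) (hs hm)
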